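/- If s, i < 2^p, i < 2^ℓ, and 2^ℓ divides s, then [s]_p + [i]_p = [s+i]_p, where [·]_p is the length-p bit reversal. -/

import Mathlib

/-- The length-`p` bit reversal of `i`. -/
def bitrev (p i : ℕ) : ℕ := ∑ j ∈ Finset.range p, (i / 2 ^ j % 2) * 2 ^ (p - 1 - j)

theorem bitrev_add (p ℓ s i : ℕ) (hs : s < 2 ^ p) (hi' : i < 2 ^ p) (hi : i < 2 ^ ℓ)
    (hdvd : 2 ^ ℓ ∣ s) :
    bitrev p s + bitrev p i = bitrev p (s + i) := by
  have key : ∀ j : ℕ, (s + i) / 2 ^ j % 2 = s / 2 ^ j % 2 + i / 2 ^ j % 2 := by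
    intro j
    by_cases h : j < ℓ
    · obtain ⟨t, ht⟩ : (2 : ℕ) ^ (j + 1) ∣ s := dvd_trans (pow_dvd_pow 2 h) hdvd
      have h2j : (0:ℕ) < 2 ^ j := by positivity
      have ht' : s = 2 ^ j * (2 * t) := by rw [ht, pow_succ]; ring
      have hst : s / 2 ^ j = 2 * t := by rw [ht', Nat.mul_div_cancel_left _ h2j]
      have hsi : (s + i) / 2 ^ j = 2 * t + i / 2 ^ j := by
        rw [ht', Nat.mul_add_div h2j]
      rw [hst, hsi, Nat.mul_add_mod, Nat.mul_mod_right, zero_add]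
    · push_neg at h
      have h2j : (0:ℕ) < 2 ^ j := by positivity
      have hij : i < 2 ^ j := lt_of_lt_of_le hi (pow_le_pow_right₀ one_le_two h)
      have hmod : (2:ℕ) ^ ℓ ∣ s % 2 ^ j := Nat.dvd_mod_iff (pow_dvd_pow 2 h) |>.mpr hdvd
      have hlt : s % 2 ^ j + i < 2 ^ j := by
        obtain ⟨c, hc⟩ := hmod
        obtain ⟨d, hd⟩ := pow_dvd_pow (2:ℕ) h
        have hm := Nat.mod_lt s h2j
        rw [hc] at hm ⊢
        rw [hd] at hm ⊢
        have hcd : c < d := Nat.lt_of_mul_lt_mul_left hm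
        have : 2 ^ ℓ * (c + 1) ≤ 2 ^ ℓ * d := Nat.mul_le_mul_left _ hcd
        have hl : (0:ℕ) < 2 ^ ℓ := by positivity
        nlinarith
      have hsi : (s + i) / 2 ^ j = s / 2 ^ j := by
        conv_lhs => rw [← Nat.div_add_mod s (2 ^ j)]
        rw [add_assoc, Nat.mul_add_div h2j, Nat.div_eq_of_lt hlt, add_zero]
      rw [hsi, Nat.div_eq_of_lt hij, Nat.zero_mod, add_zero]
  unfold bitrev
  rw [← Finset.sum_add_distrib]
  exact Finset.sum_congr rfl fun j _ => by rw [key j, add_mul]
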